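/- Assume the model is free of arbitrage. Then for every randomised stopping time χ ∈ X and every i = 1,…,d, the set P^i(χ) of χ-approximate equivalent martingale pairs (ℙ,S) with S^i_t = 1 for all t = 0,…,T is nonempty (and consequently so is the set P̄^i(χ) of χ-approximate pairs with S^i ≡ 1). -/

import Mathlib

open Pointwise
open scoped MeasureTheory

noncomputable section

/-- Euclidean dot product on `Fin d → ℝ`. -/
def dotp {d : ℕ} (x y : Fin d → ℝ) : ℝ := ∑ i, x i * y i

/-- The `i`-th canonical basis vector of `ℝ^d`. -/
def eVec {d : ℕ} (i : Fin d) : Fin d → ℝ := Pi.single i 1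

/-- The solvency cone determined by a matrix of exchange rates: the convex cone
generated by the canonical basis vectors `e^i` and the vectors `π^{ij} e^i − e^j`. -/
def solvencyCone {d : ℕ} (π : Fin d → Fin d → ℝ) : Set (Fin d → ℝ) :=
  {x | ∃ a : Fin d → ℝ, ∃ b : Fin d → Fin d → ℝ,
    (∀ i, 0 ≤ a i) ∧ (∀ i j, 0 ≤ b i j) ∧
    x = (∑ i, a i • eVec i) + ∑ i, ∑ j, b i j • (π i j • eVec i - eVec j)}

/-- Positive polar of a set in `ℝ^d`. -/
def posPolar {d : ℕ} (A : Set (Fin d → ℝ)) : Set (Fin d → ℝ) :=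
  {x | ∀ y ∈ A, 0 ≤ dotp x y}

/-- A (closed) polyhedron: a finite intersection of closed half-spaces. -/
def IsPolyhedron {d : ℕ} (A : Set (Fin d → ℝ)) : Prop :=
  ∃ (n : ℕ) (a : Fin n → Fin d → ℝ) (b : Fin n → ℝ),
    A = {x | ∀ k, dotp (a k) x ≤ b k}

/-- A finite union of nonempty (closed) polyhedra. -/
def FinUnionPoly {d : ℕ} (A : Set (Fin d → ℝ)) : Prop :=
  ∃ (n : ℕ) (Q : Fin n → Set (Fin d → ℝ)),
    (∀ k, IsPolyhedron (Q k) ∧ (Q k).Nonempty) ∧ A = ⋃ k, Q k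

/-- The atom of the σ-algebra `m` containing `ω`. -/
def atomOf {Ω : Type*} (m : MeasurableSpace Ω) (ω : Ω) : Set Ω :=
  {ω' | ∀ A : Set Ω, MeasurableSet[m] A → ω ∈ A → ω' ∈ A}

variable {Ω : Type*}

/-- A stopping time with values in `0,…,T`. -/
def IsStoppingTime (F : ℕ → MeasurableSpace Ω) (T : ℕ) (τ : Ω → ℕ) : Prop :=
  (∀ ω, τ ω ≤ T) ∧ ∀ t, MeasurableSet[F t] {ω | τ ω ≤ t}

/-- A randomised stopping time: an adapted nonnegative process with `Σ_{t=0}^T χ_t = 1`. -/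
def IsRandomisedST [Fintype Ω] (F : ℕ → MeasurableSpace Ω) (T : ℕ) (χ : ℕ → Ω → ℝ) : Prop :=
  (∀ t, t ≤ T → Measurable[F t] (χ t)) ∧ (∀ t ω, t ≤ T → 0 ≤ χ t ω) ∧
  ∀ ω, ∑ t ∈ Finset.range (T + 1), χ t ω = 1

/-- `χ*_t = Σ_{s=t}^T χ_s`. -/
def chiStar (T : ℕ) (χ : ℕ → Ω → ℝ) (t : ℕ) (ω : Ω) : ℝ := ∑ s ∈ Finset.Icc t T, χ s ω

/-- The truncated randomised stopping time `χ ∧ σ`,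
`(χ∧σ)_t = χ_t 1_{t<σ} + χ*_t 1_{t=σ}`. -/
def trunc (T : ℕ) (χ : ℕ → Ω → ℝ) (σ : Ω → ℕ) (t : ℕ) (ω : Ω) : ℝ :=
  if t < σ ω then χ t ω else if t = σ ω then chiStar T χ t ω else 0

/-- The value `A_χ = Σ_{t=0}^T χ_t A_t` of an (adapted real) process at a randomised
stopping time. -/
def valAt (T : ℕ) (χ : ℕ → Ω → ℝ) (A : ℕ → Ω → ℝ) (ω : Ω) : ℝ :=
  ∑ t ∈ Finset.range (T + 1), χ t ω * A t ω

/-- Expectation with respect to a probability `p` on a finite space. -/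
def expect [Fintype Ω] (p : Ω → ℝ) (f : Ω → ℝ) : ℝ := ∑ ω, p ω * f ω

/-- The game option payoff
`Q_{st} = Y_t 1_{s>t} + X_s 1_{s<t} + X'_s 1_{s=t}`. -/
def payoffQ {d : ℕ} (Y X X' : ℕ → Ω → Fin d → ℝ) (s t : ℕ) (ω : Ω) : Fin d → ℝ :=
  if t < s then Y t ω else if s < t then X s ω else X' s ω

/-- The auxiliary payoff
`H_{st} = Y_t 1_{s>t} + X_s 1_{s=t<T} + X'_s 1_{s=t=T}`. -/
def payoffH {d : ℕ} (T : ℕ) (Y X X' : ℕ → Ω → Fin d → ℝ) (s t : ℕ) (ω : Ω) : Fin d → ℝ :=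
  if t < s then Y t ω
  else if s = t ∧ s < T then X s ω
  else if s = t ∧ s = T then X' s ω
  else 0

/-- `(Q_{σ·}·S_{σ∧·})_χ = Σ_{t=0}^{σ−1} χ_t Y_t·S_t + χ*_{σ+1} X_σ·S_σ + χ_σ X'_σ·S_σ`. -/
def sellerValue {d : ℕ} (T : ℕ) (Y X X' S : ℕ → Ω → Fin d → ℝ) (σ : Ω → ℕ)
    (χ : ℕ → Ω → ℝ) (ω : Ω) : ℝ :=
  (∑ t ∈ Finset.range (σ ω), χ t ω * dotp (Y t ω) (S t ω))
    + chiStar T χ (σ ω + 1) ω * dotp (X (σ ω) ω) (S (σ ω) ω)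
    + χ (σ ω) ω * dotp (X' (σ ω) ω) (S (σ ω) ω)

/-- `(Q_{·τ}·S_{·∧τ})_χ = Σ_{s=0}^{τ−1} χ_s X_s·S_s + χ*_{τ+1} Y_τ·S_τ + χ_τ X'_τ·S_τ`. -/
def buyerValue {d : ℕ} (T : ℕ) (Y X X' S : ℕ → Ω → Fin d → ℝ) (τ : Ω → ℕ)
    (χ : ℕ → Ω → ℝ) (ω : Ω) : ℝ :=
  (∑ s ∈ Finset.range (τ ω), χ s ω * dotp (X s ω) (S s ω))
    + chiStar T χ (τ ω + 1) ω * dotp (Y (τ ω) ω) (S (τ ω) ω)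
    + χ (τ ω) ω * dotp (X' (τ ω) ω) (S (τ ω) ω)

/-- The randomised stopping time `χ'_t = χ_t 1_{t<σ} + χ*_σ 1_{t=T}`. -/
def chiPrime (T : ℕ) (χ : ℕ → Ω → ℝ) (σ : Ω → ℕ) (t : ℕ) (ω : Ω) : ℝ :=
  if t < σ ω then χ t ω else if t = T then chiStar T χ (σ ω) ω else 0

/-- The Kabanov discrete-time currency model with proportional transaction costs on a
finite probability space. -/
structure Market (Ω : Type*) [Fintype Ω] (d T : ℕ) where
  F : ℕ → MeasurableSpace Ω
  F_mono : ∀ s t : ℕ, s ≤ t → F s ≤ F t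
  F_zero : F 0 = ⊥
  F_top : F T = ⊤
  P : Ω → ℝ
  P_pos : ∀ ω, 0 < P ω
  P_sum : ∑ ω, P ω = 1
  pi : ℕ → Fin d → Fin d → Ω → ℝ
  pi_pos : ∀ t, t ≤ T → ∀ i j ω, 0 < pi t i j ω
  pi_one : ∀ t, t ≤ T → ∀ i ω, pi t i i ω = 1
  pi_meas : ∀ t, t ≤ T → ∀ i j, Measurable[F t] (pi t i j)

variable [Fintype Ω] {d T : ℕ}

/-- The solvency cone `K_t(ω)`. -/
def Market.cone (M : Market Ω d T) (t : ℕ) (ω : Ω) : Set (Fin d → ℝ) :=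
  solvencyCone (fun i j => M.pi t i j ω)

/-- Self-financing (predictable) trading strategy. -/
def Market.SelfFinancing (M : Market Ω d T) (y : ℕ → Ω → Fin d → ℝ) : Prop :=
  Measurable[M.F 0] (y 0) ∧ (∀ t, t < T → Measurable[M.F t] (y (t + 1))) ∧
  ∀ t, t < T → ∀ ω, y t ω - y (t + 1) ω ∈ M.cone t ω

/-- Absence of arbitrage. -/
def Market.NoArbitrage (M : Market Ω d T) : Prop :=
  ¬∃ y : ℕ → Ω → Fin d → ℝ, M.SelfFinancing y ∧ (∀ ω, y 0 ω = 0) ∧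
    ∃ x : Ω → Fin d → ℝ, (∀ ω i, 0 ≤ x ω i) ∧ x ≠ 0 ∧ ∀ ω, y T ω - x ω ∈ M.cone T ω

/-- An equivalent martingale pair `(ℙ,S)` with `S_t ∈ K*_t \ {0}`. -/
def MartingalePair (M : Market Ω d T) (p : Ω → ℝ) (S : ℕ → Ω → Fin d → ℝ) : Prop :=
  (∀ ω, 0 < p ω) ∧ (∑ ω, p ω = 1) ∧
  (∀ t, t ≤ T → Measurable[M.F t] (S t)) ∧
  (∀ t, t < T → ∀ A : Set Ω, MeasurableSet[M.F t] A →
    (∑ ω, A.indicator (fun ω' => p ω' • S (t + 1) ω') ω)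
      = ∑ ω, A.indicator (fun ω' => p ω' • S t ω') ω) ∧
  ∀ t ω, t ≤ T → S t ω ∈ posPolar (M.cone t ω) ∧ S t ω ≠ 0

/-- A `χ`-approximate martingale pair `(ℙ,S)`. -/
def ApproxPair (M : Market Ω d T) (χ : ℕ → Ω → ℝ) (p : Ω → ℝ)
    (S : ℕ → Ω → Fin d → ℝ) : Prop :=
  (∀ ω, 0 ≤ p ω) ∧ (∑ ω, p ω = 1) ∧
  (∀ t, t ≤ T → Measurable[M.F t] (S t)) ∧
  (∀ t ω, t ≤ T → S t ω ∈ posPolar (M.cone t ω) ∧ S t ω ≠ 0) ∧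
  ∀ t ω, t ≤ T →
    (∑ ω', (atomOf (M.F t) ω).indicator
      (fun ω'' => p ω'' • ∑ s ∈ Finset.Icc (t + 1) T, χ s ω'' • S s ω'') ω')
      ∈ posPolar (M.cone t ω)

/-- A `χ`-approximate martingale pair with `S^i ≡ 1`: membership of `P̄^i(χ)`. -/
def ApproxPairI (M : Market Ω d T) (χ : ℕ → Ω → ℝ) (i : Fin d) (p : Ω → ℝ)
    (S : ℕ → Ω → Fin d → ℝ) : Prop :=
  ApproxPair M χ p S ∧ ∀ t ω, t ≤ T → S t ω i = 1

/-- A `χ`-approximate equivalent martingale pair with `S^i ≡ 1`: membership of `P^i(χ)`. -/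
def EquivApproxPairI (M : Market Ω d T) (χ : ℕ → Ω → ℝ) (i : Fin d) (p : Ω → ℝ)
    (S : ℕ → Ω → Fin d → ℝ) : Prop :=
  ApproxPairI M χ i p S ∧ ∀ ω, 0 < p ω

/-- A game option `(Y,X,X')`. -/
def IsGameOption (M : Market Ω d T) (Y X X' : ℕ → Ω → Fin d → ℝ) : Prop :=
  (∀ t, t ≤ T → Measurable[M.F t] (Y t)) ∧ (∀ t, t ≤ T → Measurable[M.F t] (X t)) ∧
  (∀ t, t ≤ T → Measurable[M.F t] (X' t)) ∧
  ∀ t ω, t ≤ T → X t ω - X' t ω ∈ M.cone t ω ∧ X' t ω - Y t ω ∈ M.cone t ω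

/-- `(σ,y)` hedges the game option `(Y,X,X')` for the seller:
`y_{σ∧τ} − Q_{στ} ∈ K_{σ∧τ}` for all stopping times `τ`. -/
def HedgesSeller (M : Market Ω d T) (Y X X' : ℕ → Ω → Fin d → ℝ) (σ : Ω → ℕ)
    (y : ℕ → Ω → Fin d → ℝ) : Prop :=
  ∀ τ, IsStoppingTime M.F T τ → ∀ ω,
    y (min (σ ω) (τ ω)) ω - payoffQ Y X X' (σ ω) (τ ω) ω ∈ M.cone (min (σ ω) (τ ω)) ω

/-- `(τ,y)` hedges the game option `(Y,X,X')` for the buyer: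
`y_{σ∧τ} + Q_{στ} ∈ K_{σ∧τ}` for all stopping times `σ`. -/
def HedgesBuyer (M : Market Ω d T) (Y X X' : ℕ → Ω → Fin d → ℝ) (τ : Ω → ℕ)
    (y : ℕ → Ω → Fin d → ℝ) : Prop :=
  ∀ σ, IsStoppingTime M.F T σ → ∀ ω,
    y (min (σ ω) (τ ω)) ω + payoffQ Y X X' (σ ω) (τ ω) ω ∈ M.cone (min (σ ω) (τ ω)) ω

/-- The seller's sets `Z^a_t` (pointwise at each `ω`), by backward induction:
`Z^a_T = X'_T + K_T` and
`Z^a_t = ((Z^a_{t+1} ∩ L_t) + K_t) ∩ (Y_t + K_t) ∪ (X_t + K_t)` for `t < T`. -/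
def Za (M : Market Ω d T) (Y X X' : ℕ → Ω → Fin d → ℝ) (t : ℕ) (ω : Ω) :
    Set (Fin d → ℝ) :=
  if T ≤ t then {v | v - X' T ω ∈ M.cone T ω}
  else (({v : Fin d → ℝ | ∀ ω' ∈ atomOf (M.F t) ω, v ∈ Za M Y X X' (t + 1) ω'}
          + M.cone t ω)
        ∩ {v | v - Y t ω ∈ M.cone t ω})
      ∪ {v | v - X t ω ∈ M.cone t ω}
termination_by T - t
decreasing_by omega

/-- The seller's set `Y^a_t = Y_t + K_t` (pointwise). -/
def YaSet (M : Market Ω d T) (Y : ℕ → Ω → Fin d → ℝ) (t : ℕ) (ω : Ω) :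
    Set (Fin d → ℝ) :=
  {v | v - Y t ω ∈ M.cone t ω}

/-- The seller's set `X^a_t` (pointwise): `X_t + K_t` for `t < T`, `X'_T + K_T` at `T`. -/
def XaSet (M : Market Ω d T) (X X' : ℕ → Ω → Fin d → ℝ) (t : ℕ) (ω : Ω) :
    Set (Fin d → ℝ) :=
  if T ≤ t then {v | v - X' T ω ∈ M.cone T ω} else {v | v - X t ω ∈ M.cone t ω}

/-- The seller's set `W^a_t = Z^a_{t+1} ∩ L_t` (pointwise: intersection over the atom). -/
def WaSet (M : Market Ω d T) (Y X X' : ℕ → Ω → Fin d → ℝ) (t : ℕ) (ω : Ω) :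
    Set (Fin d → ℝ) :=
  if T ≤ t then Set.univ
  else {v | ∀ ω' ∈ atomOf (M.F t) ω, v ∈ Za M Y X X' (t + 1) ω'}

/-- The seller's set `V^a_t = W^a_t + K_t` (pointwise). -/
def VaSet (M : Market Ω d T) (Y X X' : ℕ → Ω → Fin d → ℝ) (t : ℕ) (ω : Ω) :
    Set (Fin d → ℝ) :=
  if T ≤ t then Set.univ else WaSet M Y X X' t ω + M.cone t ω

/-- The ask (seller's) price of the game option in currency `i`. -/
def askPrice (M : Market Ω d T) (Y X X' : ℕ → Ω → Fin d → ℝ) (i : Fin d) : ℝ :=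
  sInf {z : ℝ | ∃ σ y, IsStoppingTime M.F T σ ∧ M.SelfFinancing y ∧
    HedgesSeller M Y X X' σ y ∧ y 0 = fun _ => z • eVec i}

/-- The bid (buyer's) price of the game option in currency `i`. -/
def bidPrice (M : Market Ω d T) (Y X X' : ℕ → Ω → Fin d → ℝ) (i : Fin d) : ℝ :=
  sSup {w : ℝ | ∃ z : ℝ, ∃ τ y, IsStoppingTime M.F T τ ∧ M.SelfFinancing y ∧
    HedgesBuyer M Y X X' τ y ∧ y 0 = (fun _ => z • eVec i) ∧ w = -z}


set_option linter.unusedSectionVars false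
set_option maxHeartbeats 1000000

namespace NAAux


variable {ι : Type*} [Fintype ι]

def dd (x y : ι → ℝ) : ℝ := ∑ k, x k * y k

lemma dd_comm (x y : ι → ℝ) : dd x y = dd y x := by
  simp [dd, mul_comm]

lemma dd_smul_left (r : ℝ) (x y : ι → ℝ) : dd (r • x) y = r * dd x y := by
  simp [dd, Finset.mul_sum, mul_assoc]

lemma dd_sub_left (x z y : ι → ℝ) : dd (x - z) y = dd x y - dd z y := by
  simp [dd, sub_mul, Finset.sum_sub_distrib]

lemma dd_smul_right (r : ℝ) (x y : ι → ℝ) : dd x (r • y) = r * dd x y := by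
  rw [dd_comm, dd_smul_left, dd_comm]

lemma dd_sub_right (x y z : ι → ℝ) : dd x (y - z) = dd x y - dd x z := by
  rw [dd_comm, dd_sub_left, dd_comm x y, dd_comm x z]

lemma dd_sum_right {κ : Type*} (s : Finset κ) (x : ι → ℝ) (f : κ → ι → ℝ) :
    dd x (∑ k ∈ s, f k) = ∑ k ∈ s, dd x (f k) := by
  simp only [dd, Finset.sum_apply, Finset.mul_sum]
  exact Finset.sum_comm

lemma dd_self_pos {b : ι → ℝ} (hb : b ≠ 0) : 0 < dd b b := by
  obtain ⟨k, hk⟩ := Function.ne_iff.1 hb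
  refine Finset.sum_pos' (fun j _ => mul_self_nonneg _) ⟨k, Finset.mem_univ _, ?_⟩
  exact mul_self_pos.2 hk

/-- Farkas' lemma, by induction on the number of generators. -/
theorem farkas : ∀ (m : ℕ) (g : Fin m → ι → ℝ) (b : ι → ℝ),
    (¬ ∃ c : Fin m → ℝ, (∀ k, 0 ≤ c k) ∧ b = ∑ k, c k • g k) →
    ∃ y : ι → ℝ, (∀ k, dd (g k) y ≤ 0) ∧ 0 < dd b y := by
  intro m
  induction m with
  | zero =>
    intro g b hb
    refine ⟨b, fun k => k.elim0, dd_self_pos fun h0 => hb ⟨0, fun k => le_rfl, by simp [h0]⟩⟩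
  | succ m ih =>
    intro g b hb
    set g' : Fin m → ι → ℝ := fun k => g k.castSucc with hg'
    set G : ι → ℝ := g (Fin.last m) with hG
    have h1 : ¬ ∃ c : Fin m → ℝ, (∀ k, 0 ≤ c k) ∧ b = ∑ k, c k • g' k := by
      rintro ⟨c, hc, hbc⟩
      refine hb ⟨Fin.snoc c 0, ?_, ?_⟩
      · intro k
        induction k using Fin.lastCases with
        | last => simp
        | cast j => simpa using hc j
      · rw [Fin.sum_univ_castSucc]
        simpa using hbc
    obtain ⟨y, hy, hby⟩ := ih g' b h1
    by_cases hGy : dd G y ≤ 0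
    · refine ⟨y, fun k => ?_, hby⟩
      induction k using Fin.lastCases with
      | last => exact hGy
      | cast j => exact hy j
    push_neg at hGy
    have hGy0 : dd G y ≠ 0 := ne_of_gt hGy
    set g2 : Fin m → ι → ℝ := fun k => g' k - (dd (g' k) y / dd G y) • G with hg2
    set b2 : ι → ℝ := b - (dd b y / dd G y) • G with hb2
    have h2 : ¬ ∃ c : Fin m → ℝ, (∀ k, 0 ≤ c k) ∧ b2 = ∑ k, c k • g2 k := by
      rintro ⟨c, hc, hbc⟩
      have hexp : b = (∑ k, c k • g' k) +
          (dd b y / dd G y - ∑ k, c k * (dd (g' k) y / dd G y)) • G := by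
        have hbb : b = b2 + (dd b y / dd G y) • G := by rw [hb2]; abel
        conv_lhs => rw [hbb, hbc]
        simp only [hg2, smul_sub, Finset.sum_sub_distrib, smul_smul, sub_smul,
          Finset.sum_smul]
        abel
      have hκ : 0 ≤ dd b y / dd G y - ∑ k, c k * (dd (g' k) y / dd G y) := by
        have hpos : 0 < dd b y / dd G y := div_pos hby hGy
        have hneg : ∑ k, c k * (dd (g' k) y / dd G y) ≤ 0 := by
          refine Finset.sum_nonpos fun k _ => mul_nonpos_of_nonneg_of_nonpos (hc k) ?_
          exact div_nonpos_of_nonpos_of_nonneg (hy k) hGy.le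
        linarith
      refine hb ⟨Fin.snoc c (dd b y / dd G y - ∑ k, c k * (dd (g' k) y / dd G y)), ?_, ?_⟩
      · intro k
        induction k using Fin.lastCases with
        | last => simpa using hκ
        | cast j => simpa using hc j
      · rw [Fin.sum_univ_castSucc]
        simpa using hexp
    obtain ⟨y2, hy2, hby2⟩ := ih g2 b2 h2
    refine ⟨y2 - (dd G y2 / dd G y) • y, fun k => ?_, ?_⟩
    · induction k using Fin.lastCases with
      | last =>
        have : dd G (y2 - (dd G y2 / dd G y) • y) = 0 := by
          rw [dd_sub_right, dd_smul_right]
          field_simp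
          ring
        exact le_of_eq this
      | cast j =>
        have h := hy2 j
        rw [hg2, dd_sub_left, dd_smul_left, dd_comm G y2] at h
        rw [dd_sub_right, dd_smul_right]
        calc dd (g j.castSucc) y2 - dd G y2 / dd G y * dd (g j.castSucc) y
            = dd (g' j) y2 - dd (g' j) y / dd G y * dd y2 G := by
              rw [dd_comm y2 G]; rw [hg']; ring
          _ ≤ 0 := h
    · rw [dd_sub_right, dd_smul_right]
      have h := hby2
      rw [hb2, dd_sub_left, dd_smul_left, dd_comm G y2] at h
      calc (0:ℝ) < dd b y2 - dd b y / dd G y * dd y2 G := h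
        _ = dd b y2 - dd G y2 / dd G y * dd b y := by rw [dd_comm y2 G]; ring


lemma dd_add_right (x y z : ι → ℝ) : dd x (y + z) = dd x y + dd x z := by
  simp [dd, mul_add, Finset.sum_add_distrib]

section Atoms
variable {m m₁ m₂ : MeasurableSpace Ω} {ω ω' : Ω}




lemma mem_atomOf_self : ω ∈ atomOf m ω := fun _ _ h => h

lemma atomOf_measurableSet : MeasurableSet[m] (atomOf m ω) := by
  have h : atomOf m ω = ⋂ A ∈ {A : Set Ω | MeasurableSet[m] A ∧ ω ∈ A}, A := by
    ext x
    simp only [atomOf, Set.mem_setOf_eq, Set.mem_iInter]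
    exact ⟨fun h A hA => h A hA.1 hA.2, fun h A hA hωA => h A ⟨hA, hωA⟩⟩
  rw [h]
  exact MeasurableSet.biInter (Set.to_countable _) fun A hA => hA.1

lemma mem_atomOf_symm (h : ω' ∈ atomOf m ω) : ω ∈ atomOf m ω' := by
  intro A hA hω'A
  by_contra hωA
  exact (h Aᶜ hA.compl hωA) hω'A

lemma atomOf_eq_of_mem (h : ω' ∈ atomOf m ω) : atomOf m ω' = atomOf m ω := by
  have h' := mem_atomOf_symm h
  ext x
  exact ⟨fun hx A hA hωA => hx A hA (h A hA hωA), fun hx A hA hω'A => hx A hA (h' A hA hω'A)⟩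

lemma mem_atomOf_iff : ω' ∈ atomOf m ω ↔ atomOf m ω' = atomOf m ω :=
  ⟨atomOf_eq_of_mem, fun h => h ▸ mem_atomOf_self⟩

lemma measurable_of_const_on_atoms {γ : Type*} [MeasurableSpace γ] {f : Ω → γ}
    (h : ∀ ω ω', ω' ∈ atomOf m ω → f ω' = f ω) : Measurable[m] f := by
  intro s _
  have hs : f ⁻¹' s = ⋃ ω ∈ f ⁻¹' s, atomOf m ω := by
    ext x
    constructor
    · intro hx
      exact Set.mem_biUnion hx mem_atomOf_self
    · intro hx
      obtain ⟨ω, hω, hxω⟩ := Set.mem_iUnion₂.1 hx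
      simpa [Set.mem_preimage, h ω x hxω] using hω
  rw [hs]
  exact MeasurableSet.biUnion (Set.to_countable _) fun ω _ => atomOf_measurableSet

lemma const_on_atomOf_of_measurable {γ : Type*} [MeasurableSpace γ]
    [MeasurableSingletonClass γ] {f : Ω → γ} (hf : Measurable[m] f)
    (h : ω' ∈ atomOf m ω) : f ω' = f ω :=
  h _ (hf (measurableSet_singleton (f ω))) rfl

lemma atomOf_subset_of_le (hle : m₁ ≤ m₂) : atomOf m₂ ω ⊆ atomOf m₁ ω :=
  fun _ hx A hA hωA => hx A (hle A hA) hωA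

lemma atomOf_top : atomOf (⊤ : MeasurableSpace Ω) ω = {ω} := by
  ext x
  constructor
  · intro hx
    exact hx {ω} trivial rfl
  · rintro rfl
    exact mem_atomOf_self


end Atoms
variable {d : ℕ}

lemma dotp_eq_dd (x y : Fin d → ℝ) : dotp x y = dd x y := rfl

lemma dotp_smul_left (r : ℝ) (x y : Fin d → ℝ) : dotp (r • x) y = r * dotp x y := by
  simp [dotp, Finset.mul_sum, mul_assoc]

lemma dotp_sum_left {κ : Type*} (s : Finset κ) (f : κ → Fin d → ℝ) (y : Fin d → ℝ) :
    dotp (∑ k ∈ s, f k) y = ∑ k ∈ s, dotp (f k) y := by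
  rw [dotp_eq_dd, dd_comm, dd_sum_right]
  simp [dotp_eq_dd, dd_comm]

lemma mem_posPolar_smul {A : Set (Fin d → ℝ)} {v : Fin d → ℝ} (hv : v ∈ posPolar A)
    {r : ℝ} (hr : 0 ≤ r) : r • v ∈ posPolar A := by
  intro y hy
  rw [dotp_smul_left]
  exact mul_nonneg hr (hv y hy)

lemma mem_posPolar_solvencyCone {π : Fin d → Fin d → ℝ} {v : Fin d → ℝ}
    (h1 : ∀ j, 0 ≤ dotp v (eVec j))
    (h2 : ∀ i j, 0 ≤ dotp v (π i j • eVec i - eVec j)) :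
    v ∈ posPolar (solvencyCone π) := by
  rintro y ⟨a, b, ha, hb, rfl⟩
  rw [dotp_eq_dd, dd_add_right]
  simp only [dd_sum_right, dd_smul_right]
  refine add_nonneg (Finset.sum_nonneg fun k _ => mul_nonneg (ha k) (h1 k))
    (Finset.sum_nonneg fun k _ => Finset.sum_nonneg fun l _ => mul_nonneg (hb k l) (h2 k l))

-- solvency cone closure properties
lemma zero_mem_solvencyCone (π : Fin d → Fin d → ℝ) : (0 : Fin d → ℝ) ∈ solvencyCone π := by
  refine ⟨0, 0, fun _ => le_rfl, fun _ _ => le_rfl, by simp⟩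

lemma add_mem_solvencyCone {π : Fin d → Fin d → ℝ} {x y : Fin d → ℝ}
    (hx : x ∈ solvencyCone π) (hy : y ∈ solvencyCone π) : x + y ∈ solvencyCone π := by
  obtain ⟨a1, b1, ha1, hb1, rfl⟩ := hx
  obtain ⟨a2, b2, ha2, hb2, rfl⟩ := hy
  refine ⟨a1 + a2, b1 + b2, fun i => add_nonneg (ha1 i) (ha2 i),
    fun i j => add_nonneg (hb1 i j) (hb2 i j), ?_⟩
  simp only [Pi.add_apply, add_smul, Finset.sum_add_distrib]
  abel

lemma smul_mem_solvencyCone {π : Fin d → Fin d → ℝ} {x : Fin d → ℝ}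
    (hx : x ∈ solvencyCone π) {r : ℝ} (hr : 0 ≤ r) : r • x ∈ solvencyCone π := by
  obtain ⟨a, b, ha, hb, rfl⟩ := hx
  refine ⟨r • a, r • b, fun i => mul_nonneg hr (ha i),
    fun i j => mul_nonneg hr (hb i j), ?_⟩
  simp only [Pi.smul_apply, smul_eq_mul, mul_smul, smul_add, Finset.smul_sum]

lemma sum_mem_solvencyCone {π : Fin d → Fin d → ℝ} {κ : Type*} {s : Finset κ}
    {f : κ → Fin d → ℝ} (h : ∀ k ∈ s, f k ∈ solvencyCone π) :
    (∑ k ∈ s, f k) ∈ solvencyCone π :=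
  Finset.sum_induction f (· ∈ solvencyCone π) (fun _ _ => add_mem_solvencyCone)
    (zero_mem_solvencyCone π) h

lemma eVec_mem_solvencyCone (π : Fin d → Fin d → ℝ) (j : Fin d) :
    eVec j ∈ solvencyCone π := by
  refine ⟨Pi.single j 1, 0, fun i => by simp [Pi.single_apply]; positivity, fun _ _ => le_rfl, ?_⟩
  simp [Pi.single_apply, ite_smul]

lemma gen_mem_solvencyCone (π : Fin d → Fin d → ℝ) (i j : Fin d) :
    π i j • eVec i - eVec j ∈ solvencyCone π := by
  refine ⟨0, fun i' j' => if i' = i ∧ j' = j then 1 else 0, fun _ => le_rfl,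
    fun i' j' => by dsimp only; split <;> norm_num, ?_⟩
  simp [ite_smul, ite_and, Finset.sum_ite_eq, Finset.sum_ite_eq']


lemma dotp_comm (x y : Fin d → ℝ) : dotp x y = dotp y x := dd_comm x y

lemma dotp_eVec_left (j : Fin d) (v : Fin d → ℝ) : dotp (eVec j) v = v j := by
  simp [dotp, eVec, Pi.single_apply, ite_mul, Finset.sum_ite_eq, Finset.sum_ite_eq']

lemma double_filter_swap {α V : Type*} [Fintype α] [AddCommMonoid V]
    (C : α → Prop) (D : α → α → Prop) [DecidablePred C] [∀ a, DecidablePred (D a)]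
    (h : ∀ a b, (C a ∧ D a b) ↔ (C b ∧ D b a)) (f : α → α → V) :
    ∑ a ∈ Finset.univ.filter (fun a => C a),
        ∑ b ∈ Finset.univ.filter (fun b => D a b), f a b
      = ∑ a ∈ Finset.univ.filter (fun a => C a),
        ∑ b ∈ Finset.univ.filter (fun b => D a b), f b a := by
  have e1 : ∀ (g : α → α → V), ∑ a ∈ Finset.univ.filter (fun a => C a),
      ∑ b ∈ Finset.univ.filter (fun b => D a b), g a b
        = ∑ a, ∑ b, if C a ∧ D a b then g a b else 0 := by
    intro g
    rw [Finset.sum_filter]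
    refine Finset.sum_congr rfl fun a _ => ?_
    by_cases ha : C a
    · rw [if_pos ha, Finset.sum_filter]
      exact Finset.sum_congr rfl fun b _ => by simp [ha]
    · rw [if_neg ha]
      simp [ha]
  rw [e1, e1, Finset.sum_comm]
  refine Finset.sum_congr rfl fun a _ => Finset.sum_congr rfl fun b _ => ?_
  rw [if_congr (h b a) rfl rfl]

section MarketAux

attribute [local instance 5] Classical.propDecidable

open Classical in
/-- Generator vectors of the solvency cone at `(t, ω₀)`. -/
def genVec (M : Market Ω d T) (t : ℕ) (ω₀ : Ω) : (Fin d ⊕ Fin d × Fin d) → Fin d → ℝ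
  | .inl j => eVec j
  | .inr (i, j) => M.pi t i j ω₀ • eVec i - eVec j

open Classical in
/-- Flattened generators of the cone of hedgeable claims. -/
def gvec (M : Market Ω d T) (x : Fin (T + 1) × Ω × (Fin d ⊕ Fin d × Fin d)) :
    Ω × Fin d → ℝ :=
  fun p => if p.1 ∈ atomOf (M.F x.1) x.2.1 then -(genVec M x.1 x.2.1 x.2.2 p.2) else 0

lemma genVec_mem_cone (M : Market Ω d T) {t : ℕ} (ht : t ≤ T) {ω₀ ω : Ω}
    (hω : ω ∈ atomOf (M.F t) ω₀) (w : Fin d ⊕ Fin d × Fin d) :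
    genVec M t ω₀ w ∈ M.cone t ω := by
  rcases w with j | ⟨i, j⟩
  · exact eVec_mem_solvencyCone _ j
  · have hpi : M.pi t i j ω = M.pi t i j ω₀ :=
      hω _ (M.pi_meas t ht i j (measurableSet_singleton (M.pi t i j ω₀))) rfl
    show _ ∈ solvencyCone _
    rw [genVec, ← hpi]
    exact gen_mem_solvencyCone _ i j

lemma dd_gvec (M : Market Ω d T) (x : Fin (T + 1) × Ω × (Fin d ⊕ Fin d × Fin d))
    (y : Ω × Fin d → ℝ) :
    dd (gvec M x) y = -(∑ ω' ∈ Finset.univ.filter (· ∈ atomOf (M.F x.1) x.2.1),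
      dotp (genVec M x.1 x.2.1 x.2.2) (fun j => y (ω', j))) := by
  classical
  rw [dd, Fintype.sum_prod_type]
  have h : ∀ ω' : Ω, ∑ j, gvec M x (ω', j) * y (ω', j)
      = (if ω' ∈ atomOf (M.F x.1) x.2.1 then
          -(dotp (genVec M x.1 x.2.1 x.2.2) (fun j => y (ω', j))) else 0) := by
    intro ω'
    by_cases hω : ω' ∈ atomOf (M.F x.1) x.2.1
    · rw [if_pos hω]
      simp only [gvec, if_pos hω, dotp, neg_mul, ← Finset.sum_neg_distrib]
    · rw [if_neg hω]
      simp [gvec, if_neg hω]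
  rw [Finset.sum_congr rfl fun ω' _ => h ω', ← Finset.sum_filter, Finset.sum_neg_distrib]

/-- No arbitrage implies that no basis vector is a nonnegative combination of
the generators of the cone of hedgeable claims. -/
lemma no_basis_in_cone (M : Market Ω d T) (hNA : M.NoArbitrage) (ω₀ : Ω) (j₀ : Fin d) :
    ¬ ∃ c : Fin (T + 1) × Ω × (Fin d ⊕ Fin d × Fin d) → ℝ, (∀ x, 0 ≤ c x) ∧
      (fun p : Ω × Fin d => if p.1 = ω₀ ∧ p.2 = j₀ then (1 : ℝ) else 0) =
        ∑ x, c x • gvec M x := by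
  classical
  rintro ⟨c, hc, hcomb⟩
  apply hNA
  set η : Fin (T + 1) → Ω → Fin d → ℝ := fun u ω =>
    ∑ ω₁, ∑ w, c (u, ω₁, w) •
      (if ω ∈ atomOf (M.F u) ω₁ then genVec M u ω₁ w else 0) with hη
  have η_mem : ∀ (u : Fin (T + 1)) (ω : Ω), η u ω ∈ M.cone u ω := by
    intro u ω
    refine sum_mem_solvencyCone fun ω₁ _ => sum_mem_solvencyCone fun w _ => ?_
    refine smul_mem_solvencyCone ?_ (hc (u, ω₁, w))
    by_cases hω : ω ∈ atomOf (M.F u) ω₁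
    · rw [if_pos hω]
      exact genVec_mem_cone M (Nat.lt_succ_iff.1 u.isLt) hω w
    · rw [if_neg hω]
      exact zero_mem_solvencyCone _
  have η_const : ∀ (u : Fin (T + 1)) (ω ω'' : Ω), ω'' ∈ atomOf (M.F u) ω →
      η u ω'' = η u ω := by
    intro u ω ω'' h
    refine Finset.sum_congr rfl fun ω₁ _ => Finset.sum_congr rfl fun w _ => ?_
    have : (ω'' ∈ atomOf (M.F u) ω₁) = (ω ∈ atomOf (M.F u) ω₁) := by
      simp only [mem_atomOf_iff, atomOf_eq_of_mem h]
    rw [this]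
  have key : ∀ (ω : Ω) (j : Fin d),
      (if ω = ω₀ ∧ j = j₀ then (1 : ℝ) else 0) = -∑ u, η u ω j := by
    intro ω j
    have h0 := congrFun hcomb (ω, j)
    simp only [Finset.sum_apply, Pi.smul_apply, smul_eq_mul] at h0
    have h1 : ∀ x : Fin (T + 1) × Ω × (Fin d ⊕ Fin d × Fin d),
        c x * gvec M x (ω, j)
          = -(c x * (if ω ∈ atomOf (M.F x.1) x.2.1
              then genVec M x.1 x.2.1 x.2.2 j else 0)) := by
      intro x
      rw [gvec]
      by_cases hω : ω ∈ atomOf (M.F x.1) x.2.1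
      · rw [if_pos hω, if_pos hω]; dsimp only [Pi.neg_apply]; ring
      · rw [if_neg hω, if_neg hω]; ring
    rw [Finset.sum_congr rfl fun x _ => h1 x, Finset.sum_neg_distrib] at h0
    rw [h0]
    congr 1
    rw [Fintype.sum_prod_type]
    refine Finset.sum_congr rfl fun u _ => ?_
    rw [Fintype.sum_prod_type]
    have hval : η u ω j = ∑ ω₁, ∑ w, c (u, ω₁, w) *
        (if ω ∈ atomOf (M.F u) ω₁ then genVec M u ω₁ w j else 0) := by
      rw [hη]
      simp only [Finset.sum_apply, Pi.smul_apply, smul_eq_mul,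
        apply_ite (fun f : Fin d → ℝ => f j), Pi.zero_apply]
    rw [hval]
  set ηn : ℕ → Ω → Fin d → ℝ :=
    fun t => if h : t < T + 1 then η ⟨t, h⟩ else fun _ _ => 0 with hηn
  refine ⟨fun s ω => ∑ t ∈ Finset.range s, -(ηn t ω), ⟨?_, ?_, ?_⟩, ?_, ?_⟩
  · exact measurable_of_const_on_atoms fun ω ω'' _ => by simp
  · intro t ht
    refine measurable_of_const_on_atoms fun ω ω'' h => ?_
    refine Finset.sum_congr rfl fun u hu => ?_
    have hu' : u ≤ t := by
      have := Finset.mem_range.1 hu; omega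
    simp only [hηn]
    by_cases h1 : u < T + 1
    · rw [dif_pos h1]
      have h2 : ω'' ∈ atomOf (M.F u) ω :=
        atomOf_subset_of_le (M.F_mono u t hu') h
      rw [η_const ⟨u, h1⟩ ω ω'' h2]
    · rw [dif_neg h1]
  · intro t ht ω
    show (∑ u ∈ Finset.range t, -(ηn u ω)) - (∑ u ∈ Finset.range (t + 1), -(ηn u ω))
        ∈ M.cone t ω
    have he : (∑ u ∈ Finset.range t, -(ηn u ω)) - ∑ u ∈ Finset.range (t + 1), -(ηn u ω)
        = ηn t ω := by
      rw [Finset.sum_range_succ]; abel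
    rw [he]
    simp only [hηn]
    rw [dif_pos (by omega : t < T + 1)]
    exact η_mem ⟨t, by omega⟩ ω
  · intro ω
    exact Finset.sum_range_zero _
  · refine ⟨fun ω p => if ω = ω₀ ∧ p = j₀ then 1 else 0, fun ω p => ?_, ?_, fun ω => ?_⟩
    · dsimp only; split <;> norm_num
    · intro h0
      have := congrFun (congrFun h0 ω₀) j₀
      simp at this
    · have hyT : (∑ u ∈ Finset.range T, -(ηn u ω))
          = (fun p => if ω = ω₀ ∧ p = j₀ then (1 : ℝ) else 0) + ηn T ω := by
        have hs : ∑ u ∈ Finset.range (T + 1), -(ηn u ω)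
            = (fun p => if ω = ω₀ ∧ p = j₀ then (1 : ℝ) else 0) := by
          funext j
          rw [Finset.sum_apply]
          have : ∀ u ∈ Finset.range (T + 1), (-(ηn u ω)) j = -(ηn u ω j) := fun _ _ => rfl
          rw [Finset.sum_congr rfl this]
          rw [key ω j, ← Finset.sum_neg_distrib]
          rw [Finset.sum_range fun u => -(ηn u ω j)]
          refine Finset.sum_congr rfl fun u _ => ?_
          simp only [hηn]
          rw [dif_pos u.isLt]
        have h2 := Finset.sum_range_succ (fun u => -(ηn u ω)) T
        rw [hs] at h2
        calc ∑ u ∈ Finset.range T, -(ηn u ω)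
            = (∑ u ∈ Finset.range T, -(ηn u ω) + -(ηn T ω)) + ηn T ω := by abel
          _ = (fun p => if ω = ω₀ ∧ p = j₀ then (1 : ℝ) else 0) + ηn T ω := by rw [← h2]
      show (∑ u ∈ Finset.range T, -(ηn u ω))
          - (fun p => if ω = ω₀ ∧ p = j₀ then (1 : ℝ) else 0) ∈ M.cone T ω
      rw [hyT]
      have he : (fun p => if ω = ω₀ ∧ p = j₀ then (1 : ℝ) else 0) + ηn T ω
          - (fun p => if ω = ω₀ ∧ p = j₀ then (1 : ℝ) else 0) = ηn T ω := by abel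
      rw [he]
      simp only [hηn]
      rw [dif_pos (by omega : T < T + 1)]
      exact η_mem ⟨T, by omega⟩ ω


/-- The atom of `F t` containing `ω`, as a finset. -/
def AfD (M : Market Ω d T) (t : ℕ) (ω : Ω) : Finset Ω :=
  Finset.univ.filter (· ∈ atomOf (M.F t) ω)

/-- The sum of `Z` over the atom of `F t` containing `ω`. -/
def muD (M : Market Ω d T) (Z : Ω → Fin d → ℝ) (t : ℕ) (ω : Ω) : Fin d → ℝ :=
  ∑ ω' ∈ AfD M t ω, Z ω'

lemma mem_AfD_iff {M : Market Ω d T} {t : ℕ} {ω ω' : Ω} :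
    ω' ∈ AfD M t ω ↔ ω' ∈ atomOf (M.F t) ω := by
  simp [AfD]

lemma mem_AfD_self {M : Market Ω d T} {t : ℕ} {ω : Ω} : ω ∈ AfD M t ω :=
  mem_AfD_iff.2 mem_atomOf_self

lemma AfD_congr (M : Market Ω d T) {t : ℕ} {ω ω'' : Ω}
    (h : ω'' ∈ atomOf (M.F t) ω) : AfD M t ω'' = AfD M t ω := by
  rw [AfD, AfD, atomOf_eq_of_mem h]

lemma muD_congr (M : Market Ω d T) (Z : Ω → Fin d → ℝ) {t : ℕ} {ω ω'' : Ω}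
    (h : ω'' ∈ atomOf (M.F t) ω) : muD M Z t ω'' = muD M Z t ω := by
  rw [muD, muD, AfD_congr M h]

lemma muD_apply (M : Market Ω d T) (Z : Ω → Fin d → ℝ) (t : ℕ) (ω : Ω) (j : Fin d) :
    muD M Z t ω j = ∑ ω' ∈ AfD M t ω, Z ω' j := by
  rw [muD, Finset.sum_apply]

lemma muD_pos (M : Market Ω d T) {Z : Ω → Fin d → ℝ} (hZ : ∀ ω j, 0 < Z ω j)
    (t : ℕ) (ω : Ω) (j : Fin d) : 0 < muD M Z t ω j := by
  rw [muD_apply]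
  exact Finset.sum_pos (fun ω' _ => hZ ω' j) ⟨ω, mem_AfD_self⟩

/-- Conditional expectation computation: on the atom of `F t` at `ω`, the
`χ`-weighted expectation of the normalised prices collapses to a nonnegative
multiple of `muD`. -/
lemma main_sum (M : Market Ω d T) (χ : ℕ → Ω → ℝ) (hχ : IsRandomisedST M.F T χ)
    (Z : Ω → Fin d → ℝ) (hZpos : ∀ ω j, 0 < Z ω j) (i : Fin d)
    {t : ℕ} (ht : t ≤ T) (ω : Ω) :
    ∑ ω' ∈ AfD M t ω, (Z ω' i / ∑ ω₁, Z ω₁ i) •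
        ∑ s ∈ Finset.Icc (t + 1) T, χ s ω' • ((muD M Z s ω' i)⁻¹ • muD M Z s ω')
      = ((∑ s ∈ Finset.Icc (t + 1) T, χ s ω) / ∑ ω₁, Z ω₁ i) • muD M Z t ω := by
  classical
  have hCpos : (0 : ℝ) < ∑ ω₁, Z ω₁ i :=
    Finset.sum_pos (fun ω₁ _ => hZpos ω₁ i) ⟨ω, Finset.mem_univ ω⟩
  have stepA : ∀ s ∈ Finset.Icc (t + 1) T,
      (∑ ω' ∈ AfD M t ω, (Z ω' i / ∑ ω₁, Z ω₁ i) •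
          (χ s ω' • ((muD M Z s ω' i)⁻¹ • muD M Z s ω')))
        = ∑ ω' ∈ AfD M t ω, (χ s ω' / ∑ ω₁, Z ω₁ i) • Z ω' := by
    intro s hs
    obtain ⟨hs1, hs2⟩ := Finset.mem_Icc.1 hs
    have hts : t ≤ s := by omega
    have e1 : ∀ ω' : Ω, (Z ω' i / ∑ ω₁, Z ω₁ i) •
        (χ s ω' • ((muD M Z s ω' i)⁻¹ • muD M Z s ω'))
          = ∑ ω'' ∈ AfD M s ω',
              (Z ω' i / (∑ ω₁, Z ω₁ i) * (χ s ω' * (muD M Z s ω' i)⁻¹)) • Z ω'' := by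
      intro ω'
      rw [smul_smul, smul_smul, mul_assoc,
        show muD M Z s ω' = ∑ ω'' ∈ AfD M s ω', Z ω'' from rfl, Finset.smul_sum]
    rw [Finset.sum_congr rfl fun ω' _ => e1 ω']
    have hiff : ∀ a b : Ω, ((a ∈ atomOf (M.F t) ω) ∧ (b ∈ atomOf (M.F s) a))
        ↔ ((b ∈ atomOf (M.F t) ω) ∧ (a ∈ atomOf (M.F s) b)) := by
      intro a b
      constructor
      · rintro ⟨h1, h2⟩
        have h2t : b ∈ atomOf (M.F t) a := atomOf_subset_of_le (M.F_mono t s hts) h2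
        refine ⟨?_, mem_atomOf_symm h2⟩
        rw [mem_atomOf_iff] at h1 h2t ⊢
        rw [h2t, h1]
      · rintro ⟨h1, h2⟩
        have h2t : a ∈ atomOf (M.F t) b := atomOf_subset_of_le (M.F_mono t s hts) h2
        refine ⟨?_, mem_atomOf_symm h2⟩
        rw [mem_atomOf_iff] at h1 h2t ⊢
        rw [h2t, h1]
    have hswap := double_filter_swap (fun a => a ∈ atomOf (M.F t) ω)
        (fun a b => b ∈ atomOf (M.F s) a) hiff
        (fun a b => (Z a i / (∑ ω₁, Z ω₁ i) * (χ s a * (muD M Z s a i)⁻¹)) • Z b)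
    simp only [AfD]
    rw [hswap]
    refine Finset.sum_congr rfl fun a ha => ?_
    have ha' : a ∈ atomOf (M.F t) ω := (Finset.mem_filter.1 ha).2
    have hcoef : ∀ b ∈ Finset.univ.filter (fun b => b ∈ atomOf (M.F s) a),
        (Z b i / (∑ ω₁, Z ω₁ i) * (χ s b * (muD M Z s b i)⁻¹)) • Z a
          = (Z b i * (χ s a * ((muD M Z s a i)⁻¹ / ∑ ω₁, Z ω₁ i))) • Z a := by
      intro b hb
      have hb' : b ∈ atomOf (M.F s) a := (Finset.mem_filter.1 hb).2
      have hχc : χ s b = χ s a :=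
        hb' _ ((hχ.1 s hs2) (measurableSet_singleton (χ s a))) rfl
      have hμc : muD M Z s b = muD M Z s a := muD_congr M Z hb'
      rw [hχc, hμc]
      congr 1
      ring
    rw [Finset.sum_congr rfl hcoef, ← Finset.sum_smul, ← Finset.sum_mul]
    have hsumZ : ∑ b ∈ Finset.univ.filter (fun b => b ∈ atomOf (M.F s) a), Z b i
        = muD M Z s a i := by
      rw [muD_apply]
      rfl
    rw [hsumZ]
    congr 1
    have hμne : muD M Z s a i ≠ 0 := (muD_pos M hZpos s a i).ne'
    field_simp
  calc ∑ ω' ∈ AfD M t ω, (Z ω' i / ∑ ω₁, Z ω₁ i) •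
        ∑ s ∈ Finset.Icc (t + 1) T, χ s ω' • ((muD M Z s ω' i)⁻¹ • muD M Z s ω')
      = ∑ ω' ∈ AfD M t ω, ∑ s ∈ Finset.Icc (t + 1) T, (Z ω' i / ∑ ω₁, Z ω₁ i) •
          (χ s ω' • ((muD M Z s ω' i)⁻¹ • muD M Z s ω')) := by
        exact Finset.sum_congr rfl fun ω' _ => Finset.smul_sum
    _ = ∑ s ∈ Finset.Icc (t + 1) T, ∑ ω' ∈ AfD M t ω, (Z ω' i / ∑ ω₁, Z ω₁ i) •
          (χ s ω' • ((muD M Z s ω' i)⁻¹ • muD M Z s ω')) := Finset.sum_comm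
    _ = ∑ s ∈ Finset.Icc (t + 1) T, ∑ ω' ∈ AfD M t ω, (χ s ω' / ∑ ω₁, Z ω₁ i) • Z ω' :=
        Finset.sum_congr rfl stepA
    _ = ∑ ω' ∈ AfD M t ω, ∑ s ∈ Finset.Icc (t + 1) T, (χ s ω' / ∑ ω₁, Z ω₁ i) • Z ω' :=
        Finset.sum_comm
    _ = ∑ ω' ∈ AfD M t ω, ((∑ s ∈ Finset.Icc (t + 1) T, χ s ω) / ∑ ω₁, Z ω₁ i) • Z ω' := by
        refine Finset.sum_congr rfl fun ω' hω'mem => ?_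
        have hω' : ω' ∈ atomOf (M.F t) ω := mem_AfD_iff.1 hω'mem
        rw [← Finset.sum_smul, ← Finset.sum_div]
        have hchi : ∑ s ∈ Finset.Icc (t + 1) T, χ s ω'
            = ∑ s ∈ Finset.Icc (t + 1) T, χ s ω := by
          have h1 : ∀ ω'' : Ω, ∑ s ∈ Finset.Icc (t + 1) T, χ s ω''
              = 1 - ∑ s ∈ Finset.range (t + 1), χ s ω'' := by
            intro ω''
            have hsp : ∑ s ∈ Finset.range (T + 1), χ s ω''
                = ∑ s ∈ Finset.range (t + 1), χ s ω''
                  + ∑ s ∈ Finset.Icc (t + 1) T, χ s ω'' := by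
              have hcons := Finset.sum_Ico_consecutive (fun s => χ s ω'')
                (Nat.zero_le (t + 1)) (show t + 1 ≤ T + 1 by omega)
              rw [Finset.range_eq_Ico, Finset.range_eq_Ico, ← Finset.Ico_add_one_right_eq_Icc]
              exact hcons.symm
            have htot := hχ.2.2 ω''
            rw [hsp] at htot
            linarith
          rw [h1 ω', h1 ω]
          have hlow : ∑ s ∈ Finset.range (t + 1), χ s ω'
              = ∑ s ∈ Finset.range (t + 1), χ s ω := by
            refine Finset.sum_congr rfl fun s hsr => ?_
            have hst : s ≤ t := by have := Finset.mem_range.1 hsr; omega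
            have hmeas : Measurable[M.F t] (χ s) :=
              (hχ.1 s (by omega)).mono (M.F_mono s t hst) le_rfl
            exact hω' _ (hmeas (measurableSet_singleton (χ s ω))) rfl
          rw [hlow]
        rw [hchi]
    _ = ((∑ s ∈ Finset.Icc (t + 1) T, χ s ω) / ∑ ω₁, Z ω₁ i) •
          ∑ ω' ∈ AfD M t ω, Z ω' := by rw [Finset.smul_sum]
    _ = ((∑ s ∈ Finset.Icc (t + 1) T, χ s ω) / ∑ ω₁, Z ω₁ i) • muD M Z t ω := rfl


lemma dotp_eVec_sum (p2 : Fin d) (v : Fin d → ℝ) : dotp (eVec p2) v = v p2 :=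
  dotp_eVec_left p2 v

/-- From absence of arbitrage, a strictly positive functional that is consistent
with all the solvency cones. -/
lemma exists_goodZ (M : Market Ω d T) (hNA : M.NoArbitrage) :
    ∃ Z : Ω → Fin d → ℝ, (∀ ω j, 0 < Z ω j) ∧
      ∀ t, t ≤ T → ∀ ω : Ω, muD M Z t ω ∈ posPolar (M.cone t ω) := by
  classical
  have hkey : ∀ (ω₀ : Ω) (j₀ : Fin d), ∃ y : Ω × Fin d → ℝ,
      (∀ x, dd (gvec M x) y ≤ 0) ∧ 0 < y (ω₀, j₀) := by
    intro ω₀ j₀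
    set ix := Fin (T + 1) × Ω × (Fin d ⊕ Fin d × Fin d) with hix
    set e := Fintype.equivFin ix with he
    have hnm : ¬ ∃ c : Fin (Fintype.card ix) → ℝ, (∀ k, 0 ≤ c k) ∧
        (fun p : Ω × Fin d => if p.1 = ω₀ ∧ p.2 = j₀ then (1 : ℝ) else 0)
          = ∑ k, c k • gvec M (e.symm k) := by
      rintro ⟨c, hc, hbc⟩
      refine no_basis_in_cone M hNA ω₀ j₀ ⟨fun x => c (e x), fun x => hc _, ?_⟩
      rw [hbc, ← Equiv.sum_comp e (fun k => c k • gvec M (e.symm k))]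
      simp
      rfl
    obtain ⟨y, hy1, hy2⟩ := farkas (Fintype.card ix) (fun k => gvec M (e.symm k)) _ hnm
    refine ⟨y, fun x => ?_, ?_⟩
    · have := hy1 (e x)
      simpa using this
    · have heval : dd (fun p : Ω × Fin d => if p.1 = ω₀ ∧ p.2 = j₀ then (1 : ℝ) else 0) y
          = y (ω₀, j₀) := by
        rw [dd]
        rw [Finset.sum_eq_single (ω₀, j₀)]
        · simp
        · intro b _ hb
          have : ¬ (b.1 = ω₀ ∧ b.2 = j₀) := by
            intro hcon
            exact hb (Prod.ext hcon.1 hcon.2)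
          rw [if_neg this, zero_mul]
        · intro hmem
          exact absurd (Finset.mem_univ _) hmem
      rw [← heval]
      exact hy2
  choose Zk hZk1 hZk2 using hkey
  set ZZ : Ω × Fin d → ℝ := ∑ q : Ω × Fin d, Zk q.1 q.2 with hZZ
  have hZZsep : ∀ x, dd (gvec M x) ZZ ≤ 0 := by
    intro x
    rw [hZZ, dd_sum_right]
    exact Finset.sum_nonpos fun q _ => hZk1 q.1 q.2 x
  have hZknn : ∀ (ω₀ : Ω) (j₀ : Fin d) (p : Ω × Fin d), 0 ≤ Zk ω₀ j₀ p := by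
    intro ω₀ j₀ p
    have h := hZk1 ω₀ j₀ (Fin.last T, p.1, Sum.inl p.2)
    rw [dd_gvec] at h
    have hatom : atomOf (M.F ((Fin.last T : Fin (T + 1)) : ℕ)) p.1 = {p.1} := by
      have : ((Fin.last T : Fin (T + 1)) : ℕ) = T := rfl
      rw [this, M.F_top, atomOf_top]
    rw [hatom] at h
    have hfil : Finset.univ.filter (· ∈ ({p.1} : Set Ω)) = {p.1} := by
      ext a
      simp [Set.mem_singleton_iff]
    simp only [Set.mem_singleton_iff, Finset.sum_filter, Finset.sum_ite_eq, Finset.sum_ite_eq',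
      Finset.mem_univ, if_true] at h
    have : dotp (genVec M ((Fin.last T : Fin (T + 1)) : ℕ) p.1 (Sum.inl p.2))
        (fun j => Zk ω₀ j₀ (p.1, j)) = Zk ω₀ j₀ (p.1, p.2) := by
      show dotp (eVec p.2) _ = _
      rw [dotp_eVec_left]
    rw [this] at h
    have h3 : Zk ω₀ j₀ (p.1, p.2) = Zk ω₀ j₀ p := by
      congr
    rw [h3] at h
    linarith
  have hZZpos : ∀ p : Ω × Fin d, 0 < ZZ p := by
    intro p
    rw [hZZ, Finset.sum_apply]
    refine Finset.sum_pos' (fun q _ => hZknn q.1 q.2 p) ⟨p, Finset.mem_univ _, ?_⟩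
    have := hZk2 p.1 p.2
    simpa using this
  refine ⟨fun ω j => ZZ (ω, j), fun ω j => hZZpos (ω, j), ?_⟩
  intro t ht ω
  have hchar : ∀ w : Fin d ⊕ Fin d × Fin d,
      0 ≤ dotp (∑ ω' ∈ Finset.univ.filter (· ∈ atomOf (M.F t) ω), fun j => ZZ (ω', j))
        (genVec M t ω w) := by
    intro w
    have h := hZZsep (⟨t, by omega⟩, ω, w)
    rw [dd_gvec] at h
    have h2 : 0 ≤ ∑ ω' ∈ Finset.univ.filter
        (· ∈ atomOf (M.F ((⟨t, by omega⟩ : Fin (T + 1)) : ℕ)) ω),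
        dotp (genVec M ((⟨t, by omega⟩ : Fin (T + 1)) : ℕ) ω w)
          (fun j => ZZ (ω', j)) := by linarith
    rw [dotp_sum_left]
    refine le_trans h2 (le_of_eq ?_)
    refine Finset.sum_congr rfl fun ω' _ => dotp_comm _ _
  show _ ∈ posPolar (solvencyCone _)
  refine mem_posPolar_solvencyCone (fun j => ?_) (fun i' j' => ?_)
  · exact hchar (Sum.inl j)
  · exact hchar (Sum.inr (i', j'))


end MarketAux

end NAAux

open NAAux

/-- If the model is free of arbitrage then for every randomised stopping time `χ` and
every currency `i` the family `P^i(χ)` of `χ`-approximate equivalent martingale pairs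
with `S^i ≡ 1` is nonempty, and consequently so is the family `P̄^i(χ)` of
`χ`-approximate pairs with `S^i ≡ 1`. -/
theorem approxPairI_nonempty {Ω : Type*} [Fintype Ω] {d T : ℕ} (M : Market Ω d T)
    (hNA : M.NoArbitrage) (χ : ℕ → Ω → ℝ) (hχ : IsRandomisedST M.F T χ) (i : Fin d) :
    (∃ (p : Ω → ℝ) (S : ℕ → Ω → Fin d → ℝ), EquivApproxPairI M χ i p S) ∧
    (∃ (p : Ω → ℝ) (S : ℕ → Ω → Fin d → ℝ), ApproxPairI M χ i p S) := by
    classical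
  obtain ⟨Z, hZpos, hZpol⟩ := NAAux.exists_goodZ M hNA
  have hΩ : Nonempty Ω := by
    by_contra h
    rw [not_nonempty_iff] at h
    have hs := M.P_sum
    rw [Finset.univ_eq_empty, Finset.sum_empty] at hs
    norm_num at hs
  have hCpos : (0 : ℝ) < ∑ ω₁, Z ω₁ i :=
    Finset.sum_pos (fun ω₁ _ => hZpos ω₁ i) Finset.univ_nonempty
  have hμpos : ∀ t ω, 0 < NAAux.muD M Z t ω i := fun t ω => NAAux.muD_pos M hZpos t ω i
  have hSi : ∀ t (ω : Ω), ((NAAux.muD M Z t ω i)⁻¹ • NAAux.muD M Z t ω) i = 1 := by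
    intro t ω
    rw [Pi.smul_apply, smul_eq_mul]
    exact inv_mul_cancel₀ (hμpos t ω).ne'
  have hmain : ∃ p S, EquivApproxPairI M χ i p S := by
    refine ⟨fun ω => Z ω i / ∑ ω₁, Z ω₁ i,
      fun t ω => (NAAux.muD M Z t ω i)⁻¹ • NAAux.muD M Z t ω,
      ⟨⟨?_, ?_, ?_, ?_, ?_⟩, ?_⟩, ?_⟩
    · exact fun ω => le_of_lt (div_pos (hZpos ω i) hCpos)
    · rw [← Finset.sum_div]
      exact div_self hCpos.ne'
    · intro t _
      refine NAAux.measurable_of_const_on_atoms fun ω ω'' h => ?_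
      show (NAAux.muD M Z t ω'' i)⁻¹ • NAAux.muD M Z t ω''
          = (NAAux.muD M Z t ω i)⁻¹ • NAAux.muD M Z t ω
      rw [NAAux.muD_congr M Z h]
    · intro t ω ht
      constructor
      · exact NAAux.mem_posPolar_smul (hZpol t ht ω) (inv_nonneg.2 (hμpos t ω).le)
      · intro hzero
        have hzero' : (NAAux.muD M Z t ω i)⁻¹ • NAAux.muD M Z t ω = 0 := hzero
        have h1 := hSi t ω
        rw [hzero'] at h1
        simp at h1
    · intro t ω ht
      have hind : (∑ ω₁, (atomOf (M.F t) ω).indicator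
            (fun ω₂ => (Z ω₂ i / ∑ ω₃, Z ω₃ i) • ∑ s ∈ Finset.Icc (t + 1) T,
              χ s ω₂ • ((NAAux.muD M Z s ω₂ i)⁻¹ • NAAux.muD M Z s ω₂)) ω₁)
          = ∑ ω₁ ∈ NAAux.AfD M t ω, (Z ω₁ i / ∑ ω₃, Z ω₃ i) •
              ∑ s ∈ Finset.Icc (t + 1) T,
                χ s ω₁ • ((NAAux.muD M Z s ω₁ i)⁻¹ • NAAux.muD M Z s ω₁) := by
        rw [NAAux.AfD, Finset.sum_filter]
        exact (Finset.sum_congr rfl fun ω₁ _ => Set.indicator_apply _ _ _)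
      show (∑ ω₁, (atomOf (M.F t) ω).indicator
            (fun ω₂ => (Z ω₂ i / ∑ ω₃, Z ω₃ i) • ∑ s ∈ Finset.Icc (t + 1) T,
              χ s ω₂ • ((NAAux.muD M Z s ω₂ i)⁻¹ • NAAux.muD M Z s ω₂)) ω₁)
          ∈ posPolar (M.cone t ω)
      rw [hind, NAAux.main_sum M χ hχ Z hZpos i ht ω]
      refine NAAux.mem_posPolar_smul (hZpol t ht ω) (div_nonneg ?_ hCpos.le)
      exact Finset.sum_nonneg fun s hs => hχ.2.1 s ω (Finset.mem_Icc.1 hs).2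
    · intro t ω _
      exact hSi t ω
    · exact fun ω => div_pos (hZpos ω i) hCpos
  exact ⟨hmain, by obtain ⟨p, S, h⟩ := hmain; exact ⟨p, S, h.1⟩⟩
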